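/- Let n ≥ 3 and let M : Fin n → Fin n → Bool be an absorbing state of the binary trust gossip model. If i, j, k are pairwise distinct agents with i ∼ j and i ∼ k (mutual trust), then j ∼ k. (Transitivity of the mutual trust relation in absorbing states.) -/
import Mathlib

/-- A state `M` is absorbing if for all pairwise distinct agents `a z y`,
if `z` trusts `a` then `z` already agrees with `a` about `y`. -/
def Absorbing {n : ℕ} (M : Fin n → Fin n → Bool) : Prop :=
  ∀ a z y : Fin n, a ≠ z → a ≠ y → z ≠ y → M z a = true → M z y = M a y

/-- Transitivity of the mutual trust relation in absorbing states. -/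
theorem mutual_trust_trans {n : ℕ} (hn : 3 ≤ n) (M : Fin n → Fin n → Bool)
    (hdiag : ∀ i, M i i = false) (habs : Absorbing M)
    (i j k : Fin n) (hij : i ≠ j) (hik : i ≠ k) (hjk : j ≠ k)
    (hmij : M i j = true ∧ M j i = true) (hmik : M i k = true ∧ M k i = true) :
    M j k = true ∧ M k j = true := by
  constructor
  · rw [habs i j k hij hik hjk hmij.2]; exact hmik.1
  · rw [habs i k j hik hij hjk.symm hmik.2]; exact hmij.1
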